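/- Let t ≥ 4 be even. Define the distinguished symmetric cycle R in the hypercube graph on {1,−1}^t by R^0 := (1,1,…,1), R^s := the vector obtained from R^0 by negating coordinates 1,…,s (for 1 ≤ s ≤ t−1), and R^{k+t} := −R^k (for 0 ≤ k ≤ t−1). Let W(R) be the t×t matrix with rows S^k := (1/2)(R^k + R^{k+1}), 0 ≤ k ≤ t−1, and let P(t) be the matrix with entries (−1)^{i+j} for i ≤ j and (−1)^{i+j+1} for i > j. Then for every j with 1 ≤ j < t, the vector T obtained from (1,…,1) by negating coordinates 1,…,j satisfies T = P(t)^{j+1}·W(R), where P(t)^{j+1} denotes the (j+1)-th row of P(t). -/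
import Mathlib


/-- The alternating-sign Toeplitz matrix P(t). -/
def Pmat (t : ℕ) : Matrix (Fin t) (Fin t) ℝ :=
  Matrix.of fun i j =>
    if (i : ℕ) ≤ (j : ℕ) then (-1 : ℝ) ^ ((i : ℕ) + (j : ℕ))
    else (-1 : ℝ) ^ ((i : ℕ) + (j : ℕ) + 1)

/-- The distinguished symmetric cycle R in the hypercube graph on {1,-1}^t:
    R^0 = (1,…,1); for 1 ≤ s ≤ t-1, R^s is R^0 with the first s coordinates
    negated; and R^{k+t} = -R^k for 0 ≤ k ≤ t-1. -/
def Rcyc (t : ℕ) : ℕ → Fin t → ℝ := fun s i =>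
  if s < t then (if (i : ℕ) < s then -1 else 1)
  else (if (i : ℕ) < s - t then 1 else -1)

/-- The subtope matrix W(R), whose rows are S^k = (1/2)(R^k + R^{k+1}). -/
noncomputable def Wmat (t : ℕ) : Matrix (Fin t) (Fin t) ℝ :=
  Matrix.of fun (k : Fin t) (j : Fin t) =>
    (Rcyc t (k : ℕ) j + Rcyc t ((k : ℕ) + 1) j) / 2


noncomputable def pent (j k : ℕ) : ℝ := if j ≤ k then (-1)^(j+k) else (-1)^(j+k+1)

noncomputable def went (i k : ℕ) : ℝ := if k < i then 1 else if k = i then 0 else -1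

noncomputable def Fp (j n : ℕ) : ℝ := ∑ k ∈ Finset.range n, pent j k

lemma neg_one_pow_eq (m : ℕ) : (-1 : ℝ)^m = if m % 2 = 0 then 1 else -1 := by
  split_ifs with h
  · exact Even.neg_one_pow (Nat.even_iff.mpr h)
  · exact Odd.neg_one_pow (Nat.odd_iff.mpr (by omega))

lemma pent_eq (j k : ℕ) :
    pent j k = if j ≤ k then (if (j+k) % 2 = 0 then 1 else -1)
               else (if (j+k) % 2 = 0 then -1 else 1) := by
  unfold pent
  rw [neg_one_pow_eq, neg_one_pow_eq]
  split_ifs <;> simp_all <;> omega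

lemma F_closed (j n : ℕ) :
    Fp j n = if n ≤ j then (if n % 2 = 0 then 0 else if j % 2 = 0 then -1 else 1)
             else ((if j % 2 = 0 then 0 else 1) + (if (n+j) % 2 = 0 then 0 else 1)) := by
  induction n with
  | zero => simp [Fp]
  | succ n ih =>
    rw [Fp, Finset.sum_range_succ, ← Fp, ih, pent_eq]
    split_ifs <;> norm_num <;> omega

lemma key (t i j : ℕ) (ht : t % 2 = 0) (hi : i < t) (hj : j < t) :
    ∑ k ∈ Finset.range t, pent j k * went i k = if i < j then -1 else 1 := by
  have hsplit : ∑ k ∈ Finset.range t, pent j k * went i k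
      = ∑ k ∈ Finset.range (i+1), pent j k * went i k
        + ∑ k ∈ Finset.Ico (i+1) t, pent j k * went i k := by
    rw [Finset.range_eq_Ico, ← Finset.sum_Ico_consecutive _ (by omega : 0 ≤ i+1) (by omega : i+1 ≤ t),
      ← Finset.range_eq_Ico]
  have h1 : ∑ k ∈ Finset.range (i+1), pent j k * went i k = Fp j i := by
    rw [Finset.sum_range_succ]
    have : went i i = 0 := by simp [went]
    rw [this, mul_zero, add_zero, Fp]
    apply Finset.sum_congr rfl
    intro k hk
    have : went i k = 1 := by
      simp only [Finset.mem_range] at hk; simp [went, hk]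
    rw [this, mul_one]
  have h2 : ∑ k ∈ Finset.Ico (i+1) t, pent j k * went i k
      = -(Fp j t - Fp j (i+1)) := by
    have : ∑ k ∈ Finset.Ico (i+1) t, pent j k * went i k
        = ∑ k ∈ Finset.Ico (i+1) t, -pent j k := by
      apply Finset.sum_congr rfl
      intro k hk
      simp only [Finset.mem_Ico] at hk
      have : went i k = -1 := by
        unfold went; rw [if_neg (by omega), if_neg (by omega)]
      rw [this]; ring
    rw [this, Finset.sum_neg_distrib, Finset.sum_Ico_eq_sub _ (by omega : i+1 ≤ t)]
    rfl
  have h3 : Fp j (i+1) = Fp j i + pent j i := by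
    rw [Fp, Finset.sum_range_succ]; rfl
  rw [hsplit, h1, h2, h3, pent_eq, F_closed, F_closed]
  split_ifs <;> norm_num <;> omega

lemma Wmat_eq (t : ℕ) (k i : Fin t) : Wmat t k i = went (i : ℕ) (k : ℕ) := by
  have hk := k.isLt
  have hi := i.isLt
  unfold Wmat Rcyc went
  simp only [Matrix.of_apply]
  rw [if_pos hk]
  by_cases h : (k : ℕ) + 1 < t
  · rw [if_pos h]
    split_ifs <;> norm_num <;> omega
  · rw [if_neg h]
    have : (k : ℕ) + 1 - t = 0 := by omega
    rw [this]
    split_ifs <;> norm_num <;> omega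

lemma Pmat_eq (t : ℕ) (j : Fin t) (k : Fin t) : Pmat t j k = pent (j : ℕ) (k : ℕ) := by
  unfold Pmat pent
  simp only [Matrix.of_apply]

theorem stmt_11 (t : ℕ) (ht : 4 ≤ t) (hev : Even t)
    (j : ℕ) (hj1 : 1 ≤ j) (hjt : j < t) :
    -- _{−[j]}T^{(+)} = P(t)^{j+1} · W(R)   (rows of P(t) are 1-indexed)
    (fun i : Fin t => if (i : ℕ) < j then (-1 : ℝ) else 1) =
      Matrix.vecMul (fun c => Pmat t ⟨j, hjt⟩ c) (Wmat t) := by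
  funext i
  show _ = ∑ k : Fin t, Pmat t ⟨j, hjt⟩ k * Wmat t k i
  have : ∀ k : Fin t, Pmat t ⟨j, hjt⟩ k * Wmat t k i
      = pent j (k : ℕ) * went (i : ℕ) (k : ℕ) := fun k => by
    rw [Pmat_eq, Wmat_eq]
  rw [Finset.sum_congr rfl (fun k _ => this k),
    Fin.sum_univ_eq_sum_range (fun k => pent j k * went (i : ℕ) k),
    key t i j (Nat.even_iff.mp hev) i.isLt hjt]
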